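/- Let F = (f_i)_{i∈I} be a J-frame for a Krein space H with J-frame operator S = S₊ − S₋, where S₊ = T₊T₊^# and S₋ = −T₋T₋^#, and set M± = R(T±). Then R(S₊) = M₊, N(S₊) = M₊^{[⊥]}, R(S₋) = M₋, N(S₋) = M₋^{[⊥]}. Moreover, if Q is the (bounded) projection with range M₊ and kernel M₋ (well defined since H = M₊ ∔ M₋), then S₊ = Q S Q^# and S₋ = −(I − Q) S (I − Q)^#. -/

import Mathlib

/- Frames for Krein spaces ("J-frames"), following Giribet–Maestripieri–Martínez Pería–Massey.

A Krein space is modelled as a complex Hilbert space `H` together with a fundamental symmetry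
`J : H →L[ℂ] H` (selfadjoint, `J ∘L J = 1`); the indefinite inner product is `[x,y] = ⟪J x, y⟫`. -/

noncomputable section

open scoped ComplexInnerProductSpace ComplexOrder
open ContinuousLinearMap

attribute [local instance] Classical.propDecidable

namespace KreinFrames

universe u

variable {H : Type*} [NormedAddCommGroup H] [InnerProductSpace ℂ H]

/-- A subspace `M` is uniformly `J`-positive: `[x,x] ≥ α‖x‖²` on `M` for some `α > 0`. -/
def UnifJPos (J : H →L[ℂ] H) (M : Submodule ℂ H) : Prop :=
  ∃ α : ℝ, 0 < α ∧ ∀ x ∈ M, α * ‖x‖ ^ 2 ≤ (⟪J x, x⟫).re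

/-- A subspace `M` is uniformly `J`-negative: `[x,x] ≤ -α‖x‖²` on `M` for some `α > 0`. -/
def UnifJNeg (J : H →L[ℂ] H) (M : Submodule ℂ H) : Prop :=
  ∃ α : ℝ, 0 < α ∧ ∀ x ∈ M, (⟪J x, x⟫).re ≤ -(α * ‖x‖ ^ 2)

/-- Maximal uniformly `J`-positive subspace. -/
def MaxUnifJPos (J : H →L[ℂ] H) (M : Submodule ℂ H) : Prop :=
  UnifJPos J M ∧ ∀ M' : Submodule ℂ H, UnifJPos J M' → M ≤ M' → M' = M

/-- Maximal uniformly `J`-negative subspace. -/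
def MaxUnifJNeg (J : H →L[ℂ] H) (M : Submodule ℂ H) : Prop :=
  UnifJNeg J M ∧ ∀ M' : Submodule ℂ H, UnifJNeg J M' → M ≤ M' → M' = M

/-- The `J`-orthogonal companion `M^{[⊥]} = {x | [x,m] = 0 ∀ m ∈ M}` of a subspace `M`. -/
def Jorth (J : H →L[ℂ] H) (M : Submodule ℂ H) : Submodule ℂ H where
  carrier := {x | ∀ m ∈ M, ⟪J x, m⟫ = 0}
  zero_mem' := by intro m _; simp
  add_mem' := by
    intro a b ha hb m hm
    rw [map_add, inner_add_left, ha m hm, hb m hm, add_zero]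
  smul_mem' := by
    intro c x hx m hm
    rw [map_smul, inner_smul_left, hx m hm, mul_zero]

/-- `T : ℓ²(I) → H` is the synthesis operator of the family `f`, i.e. `T e_i = f_i`. -/
def IsSynthesis {I : Type*} (f : I → H) (T : lp (fun _ : I => ℂ) 2 →L[ℂ] H) : Prop :=
  ∀ i, T (lp.single 2 i 1) = f i

/-- `f` is a `J`-frame: it is a Bessel family (it admits a bounded synthesis operator `T`),
and the ranges of `T₊ = T P₊` and `T₋ = T P₋` (the synthesis operators of the subfamilies of
`J`-nonnegative and `J`-negative vectors) are maximal uniformly `J`-positive resp. maximal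
uniformly `J`-negative subspaces of `H`. -/
def IsJFrame {I : Type*} (J : H →L[ℂ] H) (f : I → H) : Prop :=
  ∃ T Tp Tm : lp (fun _ : I => ℂ) 2 →L[ℂ] H,
    IsSynthesis f T ∧
    IsSynthesis (fun i => if 0 ≤ (⟪J (f i), f i⟫).re then f i else 0) Tp ∧
    IsSynthesis (fun i => if 0 ≤ (⟪J (f i), f i⟫).re then 0 else f i) Tm ∧
    MaxUnifJPos J (LinearMap.range (Tp : (lp (fun _ : I => ℂ) 2) →ₗ[ℂ] H)) ∧ MaxUnifJNeg J (LinearMap.range (Tm : (lp (fun _ : I => ℂ) 2) →ₗ[ℂ] H))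

/-- `c₀(M, C)`: supremum of `|⟪m,n⟫|` over unit vectors `m ∈ M` and unit `J`-neutral vectors
`n` (the cone `C = {n | [n,n] = 0}`). -/
def c0 (J : H →L[ℂ] H) (M : Submodule ℂ H) : ℝ :=
  sSup {r : ℝ | ∃ m ∈ M, ∃ n : H, ⟪J n, n⟫ = 0 ∧ ‖m‖ = 1 ∧ ‖n‖ = 1 ∧ r = ‖⟪m, n⟫‖}

/-- Cosine of the Friedrichs angle between two subspaces. -/
def friedrichs (S T : Submodule ℂ H) : ℝ :=
  sSup {r : ℝ | ∃ x ∈ S ⊓ (S ⊓ T)ᗮ, ∃ y ∈ T ⊓ (S ⊓ T)ᗮ, ‖x‖ = 1 ∧ ‖y‖ = 1 ∧ r = ‖⟪x, y⟫‖}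

/-- The reduced minimum modulus `γ(A) = inf {‖Ax‖ : x ∈ N(A)^⊥, ‖x‖ = 1}`. -/
def rmm {E F : Type*} [NormedAddCommGroup E] [InnerProductSpace ℂ E]
    [NormedAddCommGroup F] [InnerProductSpace ℂ F] (A : E →L[ℂ] F) : ℝ :=
  sInf {r : ℝ | ∃ x ∈ (LinearMap.ker (A : E →ₗ[ℂ] F))ᗮ, ‖x‖ = 1 ∧ r = ‖A x‖}

/-- The set `Q` of bounded idempotents with uniformly `J`-positive range and uniformly
`J`-negative kernel. -/
def QSet (J : H →L[ℂ] H) : Set (H →L[ℂ] H) :=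
  {Q | Q ∘L Q = Q ∧ UnifJPos J (LinearMap.range (Q : H →ₗ[ℂ] H)) ∧ UnifJNeg J (LinearMap.ker (Q : H →ₗ[ℂ] H))}

/-- `ℓ²(s)` as a subspace of `ℓ²(I)`, for `s : Set I`. -/
def lpSub {I : Type*} (s : Set I) : Submodule ℂ (lp (fun _ : I => ℂ) 2) where
  carrier := {x | ∀ i ∉ s, x i = 0}
  zero_mem' := by intro i _; simp
  add_mem' := by
    intro a b ha hb i hi
    have h : (↑(a + b) : ∀ _ : I, ℂ) i = a i + b i := by rw [lp.coeFn_add]; rfl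
    rw [h, ha i hi, hb i hi, add_zero]
  smul_mem' := by
    intro c x hx i hi
    have h : (↑(c • x) : ∀ _ : I, ℂ) i = c • (x i : ℂ) := by rw [lp.coeFn_smul]; rfl
    rw [h, hx i hi, smul_zero]

/-- `S` is the `J`-frame operator of some `J`-frame: `S = T T^#` where `T` is the synthesis
operator of a `J`-frame and `T^# = J₂ T* J`. -/
def IsJFrameOperator {H : Type u} [NormedAddCommGroup H] [InnerProductSpace ℂ H]
    [CompleteSpace H] (J S : H →L[ℂ] H) : Prop :=
  ∃ (I : Type u) (f : I → H) (T Tp Tm : lp (fun _ : I => ℂ) 2 →L[ℂ] H)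
    (J2 : lp (fun _ : I => ℂ) 2 →L[ℂ] lp (fun _ : I => ℂ) 2),
    IsSynthesis f T ∧
    IsSynthesis (fun i => if 0 ≤ (⟪J (f i), f i⟫).re then f i else 0) Tp ∧
    IsSynthesis (fun i => if 0 ≤ (⟪J (f i), f i⟫).re then 0 else f i) Tm ∧
    MaxUnifJPos J (LinearMap.range (Tp : (lp (fun _ : I => ℂ) 2) →ₗ[ℂ] H)) ∧ MaxUnifJNeg J (LinearMap.range (Tm : (lp (fun _ : I => ℂ) 2) →ₗ[ℂ] H)) ∧
    (∀ (x : lp (fun _ : I => ℂ) 2) (i : I),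
      J2 x i = if 0 ≤ (⟪J (f i), f i⟫).re then (x i : ℂ) else -(x i : ℂ)) ∧
    S = T ∘L J2 ∘L adjoint T ∘L J


section Aux

variable {H : Type*} [NormedAddCommGroup H] [InnerProductSpace ℂ H]

lemma synthesis_hasSum {I : Type*} (g : I → H) (T : lp (fun _ : I => ℂ) 2 →L[ℂ] H)
    (h : IsSynthesis g T) (x : lp (fun _ : I => ℂ) 2) :
    HasSum (fun i => (x i : ℂ) • g i) (T x) := by
  have h1 : HasSum (fun i : I => lp.single 2 i (x i : ℂ)) x :=
    lp.hasSum_single (by norm_num) x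
  have h2 := h1.mapL T
  have h3 : ∀ i, T (lp.single 2 i (x i : ℂ)) = (x i : ℂ) • g i := by
    intro i
    have : lp.single 2 i (x i : ℂ)
        = (x i : ℂ) • (lp.single 2 i (1 : ℂ) : lp (fun _ : I => ℂ) 2) := by
      rw [← lp.single_smul]
      norm_num
    rw [this, map_smul, h i]
  simpa only [h3] using h2

lemma range_comp_adjoint_self {E F : Type*} [NormedAddCommGroup E] [InnerProductSpace ℂ E]
    [NormedAddCommGroup F] [InnerProductSpace ℂ F] [CompleteSpace E] [CompleteSpace F]
    (A : E →L[ℂ] F) (hcl : IsClosed (LinearMap.range (A : E →ₗ[ℂ] F) : Set F)) :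
    LinearMap.range ((A ∘L ContinuousLinearMap.adjoint A : F →L[ℂ] F) : F →ₗ[ℂ] F) = LinearMap.range (A : E →ₗ[ℂ] F) := by
  set B := ContinuousLinearMap.adjoint A with hB
  set N := LinearMap.range (A : E →ₗ[ℂ] F) with hN
  haveI : CompleteSpace N := hcl.completeSpace_coe
  let Ac : E →L[ℂ] N := A.codRestrict N (fun x => LinearMap.mem_range_self _ x)
  have hsurj : Function.Surjective Ac := by
    rintro ⟨y, v, rfl⟩
    exact ⟨v, rfl⟩
  obtain ⟨C, hC0, hC⟩ := Ac.exists_preimage_norm_le hsurj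
  have hb : ∀ y : N, ‖(y : F)‖ ≤ C * ‖B (y : F)‖ := by
    intro y
    obtain ⟨v, hv, hvn⟩ := hC y
    have hAv : A v = (y : F) := congrArg Subtype.val hv
    have e1 : ⟪(y : F), (y : F)⟫ = ⟪v, B (y : F)⟫ := by
      rw [hB, ContinuousLinearMap.adjoint_inner_right, hAv]
    have e2 : ‖(y : F)‖ ^ 2 ≤ ‖v‖ * ‖B (y : F)‖ :=
      calc ‖(y : F)‖ ^ 2 = RCLike.re ⟪(y : F), (y : F)⟫ := (inner_self_eq_norm_sq _).symm
        _ = RCLike.re ⟪v, B (y : F)⟫ := by rw [e1]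
        _ ≤ ‖⟪v, B (y : F)⟫‖ := RCLike.re_le_norm _
        _ ≤ ‖v‖ * ‖B (y : F)‖ := norm_inner_le_norm _ _
    have hyn : ‖y‖ = ‖(y : F)‖ := rfl
    rw [hyn] at hvn
    rcases eq_or_lt_of_le (norm_nonneg (y : F)) with h0 | h0
    · rw [← h0]
      positivity
    · have e3 : ‖(y : F)‖ ^ 2 ≤ (C * ‖(y : F)‖) * ‖B (y : F)‖ :=
        le_trans e2 (by
          apply mul_le_mul_of_nonneg_right hvn (norm_nonneg _))
      nlinarith [norm_nonneg (B (y : F))]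
  set D := A ∘L B with hD
  have hDmem : ∀ x : F, D x ∈ N := fun x => ⟨B x, rfl⟩
  let DN : N →L[ℂ] N := (D.comp N.subtypeL).codRestrict N (fun x => hDmem _)
  have hDN : ∀ x : N, (DN x : F) = D (x : F) := fun x => rfl
  have hbound : ∀ x : N, ‖x‖ ≤ ((C ^ 2).toNNReal : ℝ) * ‖DN x‖ := by
    intro x
    have h1 : ‖(x : F)‖ ≤ C * ‖B (x : F)‖ := hb x
    have h2 : ‖B (x : F)‖ ^ 2 ≤ ‖(x : F)‖ * ‖D (x : F)‖ := by
      have e1 : ⟪B (x : F), B (x : F)⟫ = ⟪(x : F), D (x : F)⟫ := by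
        rw [hB, ContinuousLinearMap.adjoint_inner_left]
        rfl
      calc ‖B (x : F)‖ ^ 2 = RCLike.re ⟪B (x : F), B (x : F)⟫ :=
            (inner_self_eq_norm_sq _).symm
        _ = RCLike.re ⟪(x : F), D (x : F)⟫ := by rw [e1]
        _ ≤ ‖⟪(x : F), D (x : F)⟫‖ := RCLike.re_le_norm _
        _ ≤ ‖(x : F)‖ * ‖D (x : F)‖ := norm_inner_le_norm _ _
    have hxn : ‖x‖ = ‖(x : F)‖ := rfl
    have hDNn : ‖DN x‖ = ‖D (x : F)‖ := rfl
    rw [hxn, hDNn, Real.coe_toNNReal _ (by positivity)]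
    rcases eq_or_lt_of_le (norm_nonneg (x : F)) with h0 | h0
    · rw [← h0]
      positivity
    · nlinarith [norm_nonneg (D (x : F)), norm_nonneg (B (x : F)), sq_nonneg (C * ‖B (x : F)‖)]
  have hAL : AntilipschitzWith ((C ^ 2).toNNReal) DN :=
    ContinuousLinearMap.antilipschitz_of_bound DN hbound
  have hcr : IsClosed (Set.range DN) := hAL.isClosed_range DN.uniformContinuous
  have hsetr : (LinearMap.range (DN : N →ₗ[ℂ] N) : Set N) = Set.range DN := by
    ext z
    simp [LinearMap.mem_range, Set.mem_range]
  have hcl2 : IsClosed ((LinearMap.range (DN : N →ₗ[ℂ] N) : Submodule ℂ N) : Set N) := hsetr ▸ hcr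
  haveI : CompleteSpace (LinearMap.range (DN : N →ₗ[ℂ] N)) := hcl2.completeSpace_coe
  have horth : (LinearMap.range (DN : N →ₗ[ℂ] N))ᗮ = ⊥ := by
    rw [Submodule.eq_bot_iff]
    intro z hz
    have h1 : ⟪DN z, z⟫ = 0 :=
      (Submodule.mem_orthogonal _ z).1 hz (DN z) (LinearMap.mem_range_self _ z)
    have h1' : ⟪(DN z : F), (z : F)⟫ = 0 := by
      rw [← Submodule.coe_inner]; exact h1
    have h2 : ⟪B (z : F), B (z : F)⟫ = 0 := by
      have : ⟪(z : F), D (z : F)⟫ = 0 := by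
        rw [← inner_conj_symm, ← hDN, h1', map_zero]
      rw [hB, ContinuousLinearMap.adjoint_inner_left]
      exact this
    have h3 : B (z : F) = 0 := inner_self_eq_zero.mp h2
    have h4 : ‖(z : F)‖ ≤ C * ‖B (z : F)‖ := hb z
    rw [h3, norm_zero, mul_zero] at h4
    have : ‖(z : F)‖ = 0 := le_antisymm h4 (norm_nonneg _)
    exact Subtype.ext (norm_eq_zero.mp this)
  have htop : LinearMap.range (DN : N →ₗ[ℂ] N) = ⊤ := Submodule.orthogonal_eq_bot_iff.mp horth
  apply le_antisymm
  · rintro _ ⟨x, rfl⟩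
    exact ⟨B x, rfl⟩
  · rintro _ ⟨x, rfl⟩
    have hmem : (⟨A x, LinearMap.mem_range_self _ x⟩ : N) ∈ LinearMap.range (DN : N →ₗ[ℂ] N) := by
      rw [htop]; trivial
    obtain ⟨w, hw⟩ := hmem
    exact ⟨(w : F), congrArg Subtype.val hw⟩

end Aux

set_option maxHeartbeats 2000000 in
/-- ranges and kernels of `S± = ±T± T±^#`, and the block formulas
`S₊ = Q S Q^#`, `S₋ = -(I-Q) S (I-Q)^#` for `Q = P_{M₊ // M₋}`. -/
theorem statement13 {H I : Type*} [NormedAddCommGroup H] [InnerProductSpace ℂ H] [CompleteSpace H]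
    (J : H →L[ℂ] H) (hJsa : IsSelfAdjoint J) (hJsq : J ∘L J = 1)
    (f : I → H) (T Tp Tm : lp (fun _ : I => ℂ) 2 →L[ℂ] H)
    (hT : IsSynthesis f T)
    (hTp : IsSynthesis (fun i => if 0 ≤ (⟪J (f i), f i⟫).re then f i else 0) Tp)
    (hTm : IsSynthesis (fun i => if 0 ≤ (⟪J (f i), f i⟫).re then 0 else f i) Tm)
    (hmaxp : MaxUnifJPos J (LinearMap.range (Tp : (lp (fun _ : I => ℂ) 2) →ₗ[ℂ] H)))
    (hmaxm : MaxUnifJNeg J (LinearMap.range (Tm : (lp (fun _ : I => ℂ) 2) →ₗ[ℂ] H)))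
    (J2 : lp (fun _ : I => ℂ) 2 →L[ℂ] lp (fun _ : I => ℂ) 2)
    (hJ2 : ∀ (x : lp (fun _ : I => ℂ) 2) (i : I),
      J2 x i = if 0 ≤ (⟪J (f i), f i⟫).re then (x i : ℂ) else -(x i : ℂ))
    (S Sp Sm : H →L[ℂ] H)
    (hSp : Sp = Tp ∘L J2 ∘L adjoint Tp ∘L J)
    (hSm : Sm = -(Tm ∘L J2 ∘L adjoint Tm ∘L J))
    (hS : S = Sp - Sm)
    (Q : H →L[ℂ] H) (hQ : Q ∘L Q = Q)
    (hQr : LinearMap.range (Q : H →ₗ[ℂ] H) = LinearMap.range (Tp : (lp (fun _ : I => ℂ) 2) →ₗ[ℂ] H))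
    (hQk : LinearMap.ker (Q : H →ₗ[ℂ] H) = LinearMap.range (Tm : (lp (fun _ : I => ℂ) 2) →ₗ[ℂ] H)) :
    LinearMap.range (Sp : H →ₗ[ℂ] H) = LinearMap.range (Tp : (lp (fun _ : I => ℂ) 2) →ₗ[ℂ] H) ∧
    LinearMap.ker (Sp : H →ₗ[ℂ] H) = Jorth J (LinearMap.range (Tp : (lp (fun _ : I => ℂ) 2) →ₗ[ℂ] H)) ∧
    LinearMap.range (Sm : H →ₗ[ℂ] H) = LinearMap.range (Tm : (lp (fun _ : I => ℂ) 2) →ₗ[ℂ] H) ∧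
    LinearMap.ker (Sm : H →ₗ[ℂ] H) = Jorth J (LinearMap.range (Tm : (lp (fun _ : I => ℂ) 2) →ₗ[ℂ] H)) ∧
    Sp = Q ∘L S ∘L (J ∘L adjoint Q ∘L J) ∧
    Sm = -((1 - Q) ∘L S ∘L (J ∘L adjoint (1 - Q) ∘L J)) := by
  -- pointwise consequences of `J ∘L J = 1` and `Q ∘L Q = Q`
  have hJJ : ∀ y, J (J y) = y := by
    intro y
    have := ContinuousLinearMap.ext_iff.mp hJsq y
    simpa using this
  have hQQ : ∀ y, Q (Q y) = Q y := by
    intro y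
    have := ContinuousLinearMap.ext_iff.mp hQ y
    simpa using this
  -- `Tp ∘ J2 = Tp` and `Tm ∘ J2 = -Tm` pointwise
  have hTpJ2 : ∀ u, Tp (J2 u) = Tp u := by
    intro u
    have h1 := synthesis_hasSum _ Tp hTp (J2 u)
    have h2 := synthesis_hasSum _ Tp hTp u
    refine h1.unique ?_
    have he : (fun i => ((J2 u) i : ℂ) •
        (if 0 ≤ (⟪J (f i), f i⟫).re then f i else 0)) =
        (fun i => ((u i : ℂ)) • (if 0 ≤ (⟪J (f i), f i⟫).re then f i else 0)) := by
      funext i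
      rw [hJ2]
      by_cases h : 0 ≤ (⟪J (f i), f i⟫).re <;> simp [h]
    rw [he]
    exact h2
  have hTmJ2 : ∀ u, Tm (J2 u) = -(Tm u) := by
    intro u
    have h1 := synthesis_hasSum _ Tm hTm (J2 u)
    have h2 := (synthesis_hasSum _ Tm hTm u).neg
    refine h1.unique ?_
    have he : (fun i => ((J2 u) i : ℂ) •
        (if 0 ≤ (⟪J (f i), f i⟫).re then 0 else f i)) =
        (fun i => -(((u i : ℂ)) • (if 0 ≤ (⟪J (f i), f i⟫).re then 0 else f i))) := by
      funext i
      rw [hJ2]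
      by_cases h : 0 ≤ (⟪J (f i), f i⟫).re <;> simp [h]
    rw [he]
    exact h2
  -- pointwise formulas for Sp, Sm
  have hSpx : ∀ x, Sp x = Tp (adjoint Tp (J x)) := by
    intro x
    rw [hSp]
    simp only [ContinuousLinearMap.comp_apply]
    rw [hTpJ2]
  have hSmx : ∀ x, Sm x = Tm (adjoint Tm (J x)) := by
    intro x
    rw [hSm]
    simp only [ContinuousLinearMap.neg_apply, ContinuousLinearMap.comp_apply]
    rw [hTmJ2, neg_neg]
  have hSpop : Sp = (Tp ∘L adjoint Tp) ∘L J := by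
    ext x
    simp only [ContinuousLinearMap.comp_apply]
    exact hSpx x
  have hSmop : Sm = (Tm ∘L adjoint Tm) ∘L J := by
    ext x
    simp only [ContinuousLinearMap.comp_apply]
    exact hSmx x
  -- ranges of Tp, Tm are closed
  have hrkp : LinearMap.range (Tp : (lp (fun _ : I => ℂ) 2) →ₗ[ℂ] H) = LinearMap.ker ((1 - Q : H →L[ℂ] H) : H →ₗ[ℂ] H) := by
    ext z
    constructor
    · rintro ⟨u, rfl⟩
      have hz : Tp u ∈ LinearMap.range (Q : H →ₗ[ℂ] H) := by rw [hQr]; exact ⟨u, rfl⟩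
      obtain ⟨w, hw⟩ := hz
      have : Q (Tp u) = Tp u := by rw [← hw, ContinuousLinearMap.coe_coe, hQQ]
      simp [LinearMap.mem_ker, ContinuousLinearMap.sub_apply, this]
    · intro hz
      have : z - Q z = 0 := by
        simpa [ContinuousLinearMap.sub_apply] using (LinearMap.mem_ker.mp hz)
      have hz' : z = Q z := by
        rw [sub_eq_zero] at this
        exact this
      rw [← hQr]
      exact ⟨z, hz'.symm⟩
  have hclP : IsClosed (LinearMap.range (Tp : (lp (fun _ : I => ℂ) 2) →ₗ[ℂ] H) : Set H) := by
    rw [hrkp]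
    exact ContinuousLinearMap.isClosed_ker _
  have hclM : IsClosed (LinearMap.range (Tm : (lp (fun _ : I => ℂ) 2) →ₗ[ℂ] H) : Set H) := by
    rw [← hQk]
    exact ContinuousLinearMap.isClosed_ker _
  -- Q acts as identity on range Tp and kills range Tm
  have hQTp : ∀ u, Q (Tp u) = Tp u := by
    intro u
    have hz : Tp u ∈ LinearMap.range (Q : H →ₗ[ℂ] H) := by rw [hQr]; exact ⟨u, rfl⟩
    obtain ⟨w, hw⟩ := hz
    rw [← hw, ContinuousLinearMap.coe_coe, hQQ]
  have hQTm : ∀ u, Q (Tm u) = 0 := by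
    intro u
    have hz : Tm u ∈ LinearMap.ker (Q : H →ₗ[ℂ] H) := by rw [hQk]; exact ⟨u, rfl⟩
    exact LinearMap.mem_ker.mp hz
  -- adjoint identities
  have hQTpop : Q ∘L Tp = Tp := by ext u; exact hQTp u
  have h1QTmop : (1 - Q) ∘L Tm = Tm := by
    ext u
    simp [ContinuousLinearMap.sub_apply, hQTm u]
  have hadjp : ∀ w, adjoint Tp (adjoint Q w) = adjoint Tp w := by
    intro w
    have h := congrArg ContinuousLinearMap.adjoint hQTpop
    rw [ContinuousLinearMap.adjoint_comp] at h
    exact ContinuousLinearMap.ext_iff.mp h w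
  have hadjm : ∀ w, adjoint Tm (adjoint (1 - Q) w) = adjoint Tm w := by
    intro w
    have h := congrArg ContinuousLinearMap.adjoint h1QTmop
    rw [ContinuousLinearMap.adjoint_comp] at h
    exact ContinuousLinearMap.ext_iff.mp h w
  -- pointwise formula for S
  have hSx : ∀ x, S x = Tp (adjoint Tp (J x)) - Tm (adjoint Tm (J x)) := by
    intro x
    rw [hS]
    simp only [ContinuousLinearMap.sub_apply]
    rw [hSpx, hSmx]
  -- range of composition with the surjection J
  have hrangeJ : ∀ D : H →L[ℂ] H, LinearMap.range ((D ∘L J : H →L[ℂ] H) : H →ₗ[ℂ] H) = LinearMap.range (D : H →ₗ[ℂ] H) := by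
    intro D
    ext z
    constructor
    · rintro ⟨x, rfl⟩
      exact ⟨J x, rfl⟩
    · rintro ⟨x, rfl⟩
      exact ⟨J x, by simp [hJJ]⟩
  refine ⟨?_, ?_, ?_, ?_, ?_, ?_⟩
  · rw [hSpop, hrangeJ]
    exact range_comp_adjoint_self Tp hclP
  · ext x
    constructor
    · intro hx
      have hx0 : Tp (adjoint Tp (J x)) = 0 := by
        rw [← hSpx]
        exact LinearMap.mem_ker.mp hx
      have h0 : adjoint Tp (J x) = 0 := by
        apply (inner_self_eq_zero (𝕜 := ℂ)).mp
        rw [ContinuousLinearMap.adjoint_inner_left, hx0, inner_zero_right]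
      intro m hm
      obtain ⟨u, rfl⟩ := hm
      rw [ContinuousLinearMap.coe_coe, ← ContinuousLinearMap.adjoint_inner_left, h0, inner_zero_left]
    · intro hx
      have h0 : adjoint Tp (J x) = 0 := by
        apply (inner_self_eq_zero (𝕜 := ℂ)).mp
        rw [ContinuousLinearMap.adjoint_inner_left]
        exact hx _ ⟨_, rfl⟩
      have : Sp x = 0 := by rw [hSpx, h0, map_zero]
      exact LinearMap.mem_ker.mpr this
  · rw [hSmop, hrangeJ]
    exact range_comp_adjoint_self Tm hclM
  · ext x
    constructor
    · intro hx
      have hx0 : Tm (adjoint Tm (J x)) = 0 := by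
        rw [← hSmx]
        exact LinearMap.mem_ker.mp hx
      have h0 : adjoint Tm (J x) = 0 := by
        apply (inner_self_eq_zero (𝕜 := ℂ)).mp
        rw [ContinuousLinearMap.adjoint_inner_left, hx0, inner_zero_right]
      intro m hm
      obtain ⟨u, rfl⟩ := hm
      rw [ContinuousLinearMap.coe_coe, ← ContinuousLinearMap.adjoint_inner_left, h0, inner_zero_left]
    · intro hx
      have h0 : adjoint Tm (J x) = 0 := by
        apply (inner_self_eq_zero (𝕜 := ℂ)).mp
        rw [ContinuousLinearMap.adjoint_inner_left]
        exact hx _ ⟨_, rfl⟩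
      have : Sm x = 0 := by rw [hSmx, h0, map_zero]
      exact LinearMap.mem_ker.mpr this
  · ext x
    simp only [ContinuousLinearMap.comp_apply]
    rw [hSpx, hSx, hJJ, map_sub, hQTm, hQTp, sub_zero, hadjp]
  · ext x
    simp only [ContinuousLinearMap.comp_apply, ContinuousLinearMap.neg_apply]
    rw [hSmx, hSx, hJJ, map_sub]
    simp only [ContinuousLinearMap.sub_apply, ContinuousLinearMap.one_apply]
    rw [hQTp, sub_self, hQTm, sub_zero, zero_sub, neg_neg, hadjm]


end KreinFrames
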